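/- arXiv:quant-ph/0401165 — 2 statements merged into one kernel-verified Lean document; each statement's English description precedes it below -/
import Mathlib

section
/- For the spin-j coherent state |x̂⟩ with direction x̂ and the thermal operator ρ^th = exp(-β t̂·s) with unit thermal axis t̂, the Q-function satisfies ⟨x̂|ρ^th|x̂⟩ = (cosh(β/2) - (x̂·t̂) sinh(β/2))^{2j}. -/
open Matrix Complex Real

noncomputable section

/-- j = (n-1)/2 for the n-dimensional spin representation. -/
def jr (n : ℕ) : ℝ := ((n : ℝ) - 1) / 2

/-- The magnetic quantum number m = j - k of the k-th basis vector. -/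
def mval (n : ℕ) (k : Fin n) : ℝ := jr n - (k : ℝ)

/-- The spin operator s₃, diagonal in the |j,m⟩ basis. -/
def S3 (n : ℕ) : Matrix (Fin n) (Fin n) ℂ := Matrix.diagonal fun k => (mval n k : ℂ)

/-- Raising operator s₊ = s₁ + i s₂, with s₊|j,m⟩ = √(j(j+1)-m(m+1)) |j,m+1⟩. -/
def Sp (n : ℕ) : Matrix (Fin n) (Fin n) ℂ := fun k' k =>
  if (k' : ℕ) + 1 = (k : ℕ) then
    ((Real.sqrt (jr n * (jr n + 1) - mval n k * (mval n k + 1)) : ℝ) : ℂ) else 0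

/-- Lowering operator s₋ = s₁ - i s₂. -/
def Sm (n : ℕ) : Matrix (Fin n) (Fin n) ℂ := (Sp n)ᴴ

/-- The spin operator s₁. -/
def S1 (n : ℕ) : Matrix (Fin n) (Fin n) ℂ := (1/2 : ℂ) • (Sp n + Sm n)

/-- The spin operator s₂. -/
def S2 (n : ℕ) : Matrix (Fin n) (Fin n) ℂ := (-(Complex.I/2)) • (Sp n - Sm n)

/-- The triple of spin operators (s₁,s₂,s₃). -/
def Svec (n : ℕ) : Fin 3 → Matrix (Fin n) (Fin n) ℂ := ![S1 n, S2 n, S3 n]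

/-- The highest weight state |j,j⟩ (index k = 0). -/
def hw (n : ℕ) : Fin n → ℂ := fun k => if (k : ℕ) = 0 then 1 else 0

/-- The rotation D(φ,θ,0) = e^{-iφ s₃} e^{-iθ s₂}. -/
def Dmat (n : ℕ) (φ θ : ℝ) : Matrix (Fin n) (Fin n) ℂ :=
  NormedSpace.exp ((-(φ : ℂ) * Complex.I) • S3 n) *
    NormedSpace.exp ((-(θ : ℂ) * Complex.I) • S2 n)

/-- The spin coherent state |x̂⟩ = D(φ,θ,0)|j,j⟩ with
x̂ = (sin θ cos φ, sin θ sin φ, cos θ). -/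
def coh (n : ℕ) (θ φ : ℝ) : Fin n → ℂ := (Dmat n φ θ).mulVec (hw n)

/-- The unit vector with polar angles (θ,φ). -/
def xhat (θ φ : ℝ) : Fin 3 → ℝ := ![Real.sin θ * Real.cos φ, Real.sin θ * Real.sin φ, Real.cos θ]

def wv (n : ℕ) (a b : ℂ) : Fin n → ℂ := fun k =>
  ((Real.sqrt ((n-1).choose (k : ℕ)) : ℝ) : ℂ) * a ^ (n-1-(k:ℕ)) * b ^ (k:ℕ)

lemma sqrt_step (N K : ℕ) (h : K < N) :
    Real.sqrt (((K:ℝ)+1) * ((N:ℝ)-(K:ℝ))) * Real.sqrt (N.choose (K+1)) =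
      ((N - K : ℕ) : ℝ) * Real.sqrt (N.choose K) := by
  have h1 : (0:ℝ) ≤ (N:ℝ) - K := sub_nonneg.2 (Nat.cast_le.2 h.le)
  have h0 : (0:ℝ) ≤ ((K:ℝ)+1) * ((N:ℝ)-(K:ℝ)) := mul_nonneg (by positivity) h1
  have hNK : ((N - K : ℕ) : ℝ) = (N:ℝ) - K := by
    push_cast [Nat.cast_sub h.le]; ring
  rw [← Real.sqrt_mul h0,
    show ((N - K : ℕ):ℝ) * Real.sqrt (N.choose K)
      = Real.sqrt (((N-K:ℕ):ℝ)^2 * (N.choose K)) by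
    rw [Real.sqrt_mul (by positivity), Real.sqrt_sq (by positivity)]]
  congr 1
  have hc : ((N.choose (K+1)) : ℝ) * (K+1) = (N.choose K : ℝ) * ((N:ℝ) - K) := by
    rw [← hNK]; exact_mod_cast congrArg (Nat.cast : ℕ → ℝ) (Nat.choose_succ_right_eq N K)
  rw [hNK]; nlinarith [hc]

-- the radicand in Sp at column index k (with (k:ℕ) = K+1 ≥ 1) equals K(N-K+1)-type expr;
-- we state: for k : Fin n, jr n * (jr n+1) - mval n k * (mval n k + 1) = (k:ℝ) * ((n:ℝ) - (k:ℝ))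
lemma radicand_eq (n : ℕ) (hn : 0 < n) (k : Fin n) :
    jr n * (jr n + 1) - mval n k * (mval n k + 1) = (k:ℝ) * ((n:ℝ) - (k:ℝ)) := by
  unfold mval jr
  ring

end
noncomputable section
lemma Sp_mulVec (n : ℕ) (a b : ℂ) (k : Fin n) :
    (Sp n).mulVec (wv n a b) k =
      (((n-1-(k:ℕ)) : ℕ) : ℂ) * ((Real.sqrt ((n-1).choose (k:ℕ)) : ℝ) : ℂ) *
        a ^ (n-1-(k:ℕ)-1) * b ^ ((k:ℕ)+1) := by
  have hn : 0 < n := k.pos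
  rw [Matrix.mulVec, dotProduct]
  by_cases hk : (k:ℕ)+1 < n
  · set k' : Fin n := ⟨(k:ℕ)+1, hk⟩ with hk'
    rw [Finset.sum_eq_single k']
    · have hcond : (k:ℕ)+1 = (k':ℕ) := rfl
      have hrad := radicand_eq n hn k'
      have hKN : (k:ℕ) < n - 1 := by omega
      have hcast : (k':ℝ) * ((n:ℝ) - (k':ℝ)) = (((k:ℕ):ℝ)+1) * (((n-1:ℕ):ℝ) - ((k:ℕ):ℝ)) := by
        have h1 : ((k':ℕ):ℝ) = ((k:ℕ):ℝ) + 1 := by norm_num [hk']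
        have h2 : ((n-1:ℕ):ℝ) = (n:ℝ) - 1 := by push_cast [Nat.cast_sub hn]; ring
        rw [h1, h2]; ring
      have hstep := sqrt_step (n-1) (k:ℕ) hKN
      have e1 : Sp n k k' = ((Real.sqrt ((((k:ℕ):ℝ)+1) * (((n-1:ℕ):ℝ) - ((k:ℕ):ℝ))) : ℝ) : ℂ) := by
        rw [Sp, if_pos hcond, hrad, hcast]
      have e2 : wv n a b k' = ((Real.sqrt ((n-1).choose ((k:ℕ)+1)) : ℝ) : ℂ)
          * a ^ (n-1-(k:ℕ)-1) * b ^ ((k:ℕ)+1) := by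
        simp only [wv, hk', Fin.val_mk, Nat.sub_sub]
        have hx : n - (1 + ((k:ℕ) + 1)) = n - (1 + (k:ℕ) + 1) := by omega
        rw [hx]
      rw [e1, e2]
      have hstepC : ((Real.sqrt ((((k:ℕ):ℝ)+1) * (((n-1:ℕ):ℝ) - ((k:ℕ):ℝ))) : ℝ) : ℂ)
          * ((Real.sqrt ((n-1).choose ((k:ℕ)+1)) : ℝ) : ℂ)
          = (((n-1-(k:ℕ)) : ℕ) : ℂ) * ((Real.sqrt ((n-1).choose (k:ℕ)) : ℝ) : ℂ) := by
        rw [← Complex.ofReal_mul, hstep]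
        push_cast
        ring_nf
      calc ((Real.sqrt ((((k:ℕ):ℝ)+1) * (((n-1:ℕ):ℝ) - ((k:ℕ):ℝ))) : ℝ) : ℂ)
            * (((Real.sqrt ((n-1).choose ((k:ℕ)+1)) : ℝ) : ℂ) * a ^ (n-1-(k:ℕ)-1) * b ^ ((k:ℕ)+1))
          = (((Real.sqrt ((((k:ℕ):ℝ)+1) * (((n-1:ℕ):ℝ) - ((k:ℕ):ℝ))) : ℝ) : ℂ)
            * ((Real.sqrt ((n-1).choose ((k:ℕ)+1)) : ℝ) : ℂ)) * a ^ (n-1-(k:ℕ)-1) * b ^ ((k:ℕ)+1) := by ring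
        _ = _ := by rw [hstepC]
    · intro j _ hj
      have hne : ¬ ((k:ℕ)+1 = (j:ℕ)) := fun hc => hj (Fin.ext hc.symm)
      show Sp n k j * wv n a b j = 0
      rw [Sp]; simp [hne]
    · intro h; exact absurd (Finset.mem_univ k') h
  · have h0 : ∀ j : Fin n, Sp n k j * wv n a b j = 0 := by
      intro j
      have : ¬ ((k:ℕ)+1 = (j:ℕ)) := by have := j.isLt; omega
      rw [Sp]; simp [this]
    rw [Finset.sum_congr rfl (fun j _ => h0 j), Finset.sum_const_zero]
    have : n - 1 - (k:ℕ) = 0 := by omega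
    rw [this]
    simp
end
noncomputable section
lemma sqrt_step2 (N K : ℕ) (h1 : 1 ≤ K) (h2 : K ≤ N) :
    Real.sqrt ((K:ℝ) * ((N:ℝ)-(K:ℝ)+1)) * Real.sqrt (N.choose (K-1)) =
      (K : ℝ) * Real.sqrt (N.choose K) := by
  have hx : (0:ℝ) ≤ (N:ℝ) - K + 1 := by
    have : (K:ℝ) ≤ N := Nat.cast_le.2 h2; linarith
  have h0 : (0:ℝ) ≤ (K:ℝ) * ((N:ℝ)-(K:ℝ)+1) := mul_nonneg (by positivity) hx
  rw [← Real.sqrt_mul h0,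
    show (K:ℝ) * Real.sqrt (N.choose K) = Real.sqrt ((K:ℝ)^2 * (N.choose K)) by
      rw [Real.sqrt_mul (by positivity), Real.sqrt_sq (by positivity)]]
  congr 1
  have this : N.choose K * K = N.choose (K-1) * (N - (K-1)) := by
    have h := Nat.choose_succ_right_eq N (K-1)
    have hK : K - 1 + 1 = K := by omega
    rw [hK] at h
    exact h
  have hc : (N.choose K : ℝ) * K = (N.choose (K-1) : ℝ) * ((N:ℝ) - (K-1:ℕ)) := by
    have hle : (K-1:ℕ) ≤ N := by omega
    have : (N.choose K) * K = (N.choose (K-1)) * (N - (K-1)) := this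
    calc (N.choose K : ℝ) * K = ((N.choose K * K : ℕ) : ℝ) := by push_cast; ring
      _ = ((N.choose (K-1) * (N - (K-1)) : ℕ) : ℝ) := by
          exact_mod_cast congrArg (Nat.cast : ℕ → ℝ) this
      _ = (N.choose (K-1) : ℝ) * ((N:ℝ) - (K-1:ℕ)) := by
          push_cast [Nat.cast_sub hle]; ring
  have hK1 : ((K-1:ℕ):ℝ) = (K:ℝ) - 1 := by push_cast [Nat.cast_sub h1]; ring
  rw [hK1] at hc
  nlinarith [hc]

lemma Sm_mulVec (n : ℕ) (a b : ℂ) (k : Fin n) :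
    (Sm n).mulVec (wv n a b) k =
      (((k:ℕ)) : ℂ) * ((Real.sqrt ((n-1).choose (k:ℕ)) : ℝ) : ℂ) *
        a ^ (n-(k:ℕ)) * b ^ ((k:ℕ)-1) := by
  have hn : 0 < n := k.pos
  rw [Matrix.mulVec, dotProduct]
  by_cases hk : 1 ≤ (k:ℕ)
  · have hjlt : (k:ℕ)-1 < n := by omega
    set j' : Fin n := ⟨(k:ℕ)-1, hjlt⟩ with hj'
    rw [Finset.sum_eq_single j']
    · have hcond : (j':ℕ)+1 = (k:ℕ) := by simp [hj']; omega
      have hrad := radicand_eq n hn k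
      have e1 : Sm n k j' = ((Real.sqrt (((k:ℕ):ℝ) * ((n:ℝ) - ((k:ℕ):ℝ))) : ℝ) : ℂ) := by
        rw [Sm, Matrix.conjTranspose_apply, Sp, if_pos hcond, hrad]
        rw [Complex.star_def, Complex.conj_ofReal]
      have e2 : wv n a b j' = ((Real.sqrt ((n-1).choose ((k:ℕ)-1)) : ℝ) : ℂ)
          * a ^ (n-(k:ℕ)) * b ^ ((k:ℕ)-1) := by
        simp only [wv, hj', Fin.val_mk]
        have hx : n - 1 - ((k:ℕ) - 1) = n - (k:ℕ) := by omega
        rw [hx]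
      rw [e1, e2]
      have hcast : ((k:ℕ):ℝ) * ((n:ℝ) - ((k:ℕ):ℝ))
          = ((k:ℕ):ℝ) * (((n-1:ℕ):ℝ) - ((k:ℕ):ℝ) + 1) := by
        have h2 : ((n-1:ℕ):ℝ) = (n:ℝ) - 1 := by push_cast [Nat.cast_sub hn]; ring
        rw [h2]; ring
      have hstep := sqrt_step2 (n-1) (k:ℕ) hk (by omega)
      have hstepC : ((Real.sqrt (((k:ℕ):ℝ) * ((n:ℝ) - ((k:ℕ):ℝ))) : ℝ) : ℂ)
          * ((Real.sqrt ((n-1).choose ((k:ℕ)-1)) : ℝ) : ℂ)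
          = (((k:ℕ)) : ℂ) * ((Real.sqrt ((n-1).choose (k:ℕ)) : ℝ) : ℂ) := by
        rw [hcast, ← Complex.ofReal_mul, hstep]
        push_cast
        ring_nf
      calc ((Real.sqrt (((k:ℕ):ℝ) * ((n:ℝ) - ((k:ℕ):ℝ))) : ℝ) : ℂ)
            * (((Real.sqrt ((n-1).choose ((k:ℕ)-1)) : ℝ) : ℂ) * a ^ (n-(k:ℕ)) * b ^ ((k:ℕ)-1))
          = (((Real.sqrt (((k:ℕ):ℝ) * ((n:ℝ) - ((k:ℕ):ℝ))) : ℝ) : ℂ)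
            * ((Real.sqrt ((n-1).choose ((k:ℕ)-1)) : ℝ) : ℂ)) * a ^ (n-(k:ℕ)) * b ^ ((k:ℕ)-1) := by
            ring
        _ = _ := by rw [hstepC]
    · intro j _ hj
      have hne : ¬ ((j:ℕ)+1 = (k:ℕ)) := by
        intro hc
        apply hj
        apply Fin.ext
        simp [hj']
        omega
      show Sm n k j * wv n a b j = 0
      rw [Sm, Matrix.conjTranspose_apply, Sp]
      simp [hne]
    · intro h; exact absurd (Finset.mem_univ j') h
  · have hK0 : (k:ℕ) = 0 := by omega
    have h0 : ∀ j : Fin n, Sm n k j * wv n a b j = 0 := by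
      intro j
      have : ¬ ((j:ℕ)+1 = (k:ℕ)) := by omega
      rw [Sm, Matrix.conjTranspose_apply, Sp]; simp [this]
    rw [Finset.sum_congr rfl (fun j _ => h0 j), Finset.sum_const_zero, hK0]
    simp

lemma S3_mulVec (n : ℕ) (a b : ℂ) (k : Fin n) :
    (S3 n).mulVec (wv n a b) k = ((mval n k : ℝ) : ℂ) * wv n a b k := by
  rw [S3, Matrix.mulVec_diagonal]
end
noncomputable section
lemma Mdecomp (n : ℕ) (c₁ c₂ c₃ : ℂ) :
    c₁ • S1 n + c₂ • S2 n + c₃ • S3 n =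
      ((c₁ - Complex.I*c₂)/2) • Sp n + ((c₁ + Complex.I*c₂)/2) • Sm n + c₃ • S3 n := by
  ext i j
  simp only [S1, S2, Matrix.add_apply, Matrix.smul_apply, Matrix.sub_apply, smul_eq_mul]
  ring

lemma key_mulVec (n : ℕ) (c₁ c₂ c₃ a b : ℂ) (k : Fin n) :
    (c₁ • S1 n + c₂ • S2 n + c₃ • S3 n).mulVec (wv n a b) k =
      (((Real.sqrt ((n-1).choose (k:ℕ)) : ℝ) : ℂ) *
          ((((n-1-(k:ℕ)) : ℕ):ℂ) * a^(n-1-(k:ℕ)-1) * ((c₃*a + (c₁ - Complex.I*c₂)*b)/2))) * b^(k:ℕ)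
      + (((Real.sqrt ((n-1).choose (k:ℕ)) : ℝ) : ℂ) * a^(n-1-(k:ℕ))) *
          (((k:ℕ):ℂ) * b^((k:ℕ)-1) * (((c₁ + Complex.I*c₂)*a - c₃*b)/2)) := by
  have hn : 0 < n := k.pos
  have hKn : (k:ℕ) ≤ n-1 := by have := k.isLt; omega
  rw [Mdecomp, Matrix.add_mulVec, Matrix.add_mulVec, Matrix.smul_mulVec,
    Matrix.smul_mulVec, Matrix.smul_mulVec]
  simp only [Pi.add_apply, Pi.smul_apply, smul_eq_mul]
  rw [Sp_mulVec, Sm_mulVec, S3_mulVec]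
  have hm : ((mval n k : ℝ) : ℂ) = ((((n-1-(k:ℕ)) : ℕ):ℂ) - ((k:ℕ):ℂ))/2 := by
    unfold mval jr
    push_cast [Nat.cast_sub hKn, Nat.cast_sub hn]
    ring
  rw [hm, wv]
  rcases Nat.lt_or_ge (k:ℕ) (n-1) with hlt | hge
  · obtain ⟨q, hq⟩ : ∃ q, n-1-(k:ℕ) = q+1 := ⟨n-1-(k:ℕ)-1, by omega⟩
    have hnk : n - (k:ℕ) = q+2 := by omega
    rcases Nat.eq_zero_or_pos (k:ℕ) with hK0 | hKpos
    · rw [hq, hnk, hK0]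
      simp only [Nat.add_sub_cancel]
      push_cast
      ring
    · obtain ⟨r, hr⟩ : ∃ r, (k:ℕ) = r+1 := ⟨(k:ℕ)-1, by omega⟩
      rw [hq, hnk, hr]
      simp only [Nat.add_sub_cancel]
      push_cast
      ring
  · have hKN : (k:ℕ) = n-1 := le_antisymm hKn hge
    have h0 : n-1-(k:ℕ) = 0 := by omega
    have hnk : n - (k:ℕ) = 1 := by omega
    rcases Nat.eq_zero_or_pos (k:ℕ) with hK0 | hKpos
    · have hn1 : n = 1 := by omega
      subst hn1
      rw [hK0]
      norm_num
    · obtain ⟨r, hr⟩ : ∃ r, (k:ℕ) = r+1 := ⟨(k:ℕ)-1, by omega⟩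
      rw [h0, hnk, hr]
      simp only [Nat.add_sub_cancel]
      push_cast
      ring
end
noncomputable section

def Ck (n : ℕ) (k : Fin n) : Matrix (Fin n) (Fin n) ℂ :=
  Matrix.of fun k' _ => if k' = k then 1 else 0

def Vs (n : ℕ) (v : Fin n → ℂ) : Matrix (Fin n) (Fin n) ℂ := ∑ k, v k • Ck n k

lemma Vs_apply (n : ℕ) (v : Fin n → ℂ) (k j : Fin n) : Vs n v k j = v k := by
  simp [Vs, Ck, Matrix.sum_apply]

lemma mul_Vs (n : ℕ) (M : Matrix (Fin n) (Fin n) ℂ) (v : Fin n → ℂ) :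
    M * Vs n v = Vs n (M.mulVec v) := by
  ext k j
  rw [Matrix.mul_apply, Vs_apply, Matrix.mulVec, dotProduct]
  exact Finset.sum_congr rfl fun l _ => by rw [Vs_apply]

lemma hasDerivAt_cpow_nat {f : ℝ → ℂ} {f' : ℂ} {u : ℝ} (h : HasDerivAt f f' u) (m : ℕ) :
    HasDerivAt (fun x => f x ^ m) ((m:ℂ) * f u ^ (m-1) * f') u := by
  induction m with
  | zero => simpa using hasDerivAt_const u (1:ℂ)
  | succ m ih =>
    have hm := ih.fun_mul h
    rcases Nat.eq_zero_or_pos m with rfl | hmpos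
    · simpa using hm
    · have hpow : f u ^ m = f u ^ (m-1) * f u := by
        conv_lhs => rw [← Nat.succ_pred_eq_of_pos hmpos]
        rw [pow_succ]
        rfl
      have hfe : (fun x => f x ^ m * f x) = fun x => f x ^ (m+1) :=
        funext fun x => (pow_succ _ _).symm
      rw [hfe] at hm
      refine hm.congr_deriv (Eq.symm ?_)
      rw [Nat.add_sub_cancel, hpow]
      push_cast
      ring

theorem master (n : ℕ) (c₁ c₂ c₃ : ℂ) (a b : ℝ → ℂ)
    (ha : ∀ u, HasDerivAt a ((c₃ * a u + (c₁ - Complex.I*c₂) * b u)/2) u)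
    (hb : ∀ u, HasDerivAt b (((c₁ + Complex.I*c₂) * a u - c₃ * b u)/2) u)
    (β : ℝ) :
    (NormedSpace.exp (β • (c₁ • S1 n + c₂ • S2 n + c₃ • S3 n))).mulVec (wv n (a 0) (b 0))
      = wv n (a β) (b β) := by
  rcases Nat.eq_zero_or_pos n with hn | hn
  · subst hn; funext k; exact k.elim0
  letI : SeminormedRing (Matrix (Fin n) (Fin n) ℂ) := Matrix.linftyOpSemiNormedRing
  letI : NormedRing (Matrix (Fin n) (Fin n) ℂ) := Matrix.linftyOpNormedRing
  letI : NormedAlgebra ℝ (Matrix (Fin n) (Fin n) ℂ) := Matrix.linftyOpNormedAlgebra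
  letI : NormedAlgebra ℂ (Matrix (Fin n) (Fin n) ℂ) := Matrix.linftyOpNormedAlgebra
  set M : Matrix (Fin n) (Fin n) ℂ := c₁ • S1 n + c₂ • S2 n + c₃ • S3 n with hM
  set v : ℝ → Fin n → ℂ := fun u => wv n (a u) (b u) with hv
  set dv : ℝ → Fin n → ℂ := fun u k =>
    (((Real.sqrt ((n-1).choose (k:ℕ)) : ℝ) : ℂ) *
        ((((n-1-(k:ℕ)) : ℕ):ℂ) * a u ^ (n-1-(k:ℕ)-1) * ((c₃ * a u + (c₁ - Complex.I*c₂) * b u)/2)))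
      * b u ^ (k:ℕ)
    + (((Real.sqrt ((n-1).choose (k:ℕ)) : ℝ) : ℂ) * a u ^ (n-1-(k:ℕ))) *
        (((k:ℕ):ℂ) * b u ^ ((k:ℕ)-1) * (((c₁ + Complex.I*c₂) * a u - c₃ * b u)/2)) with hdv
  have hMv : ∀ u, M.mulVec (v u) = dv u := fun u => funext fun k => key_mulVec n c₁ c₂ c₃ _ _ k
  have hvd : ∀ u (k : Fin n), HasDerivAt (fun u => v u k) (dv u k) u := by
    intro u k
    have h1 : HasDerivAt (fun u => ((Real.sqrt ((n-1).choose (k:ℕ)) : ℝ) : ℂ) * a u ^ (n-1-(k:ℕ)))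
        (((Real.sqrt ((n-1).choose (k:ℕ)) : ℝ) : ℂ) *
          ((((n-1-(k:ℕ)) : ℕ):ℂ) * a u ^ (n-1-(k:ℕ)-1) * ((c₃ * a u + (c₁ - Complex.I*c₂) * b u)/2))) u :=
      (hasDerivAt_cpow_nat (ha u) _).const_mul _
    have h2 : HasDerivAt (fun u => b u ^ (k:ℕ))
        (((k:ℕ):ℂ) * b u ^ ((k:ℕ)-1) * (((c₁ + Complex.I*c₂) * a u - c₃ * b u)/2)) u :=
      hasDerivAt_cpow_nat (hb u) _
    have := h1.fun_mul h2
    simpa [hv, hdv, wv, mul_assoc, mul_comm, mul_left_comm] using this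
  have hW : ∀ u, HasDerivAt (fun u => Vs n (v u)) (Vs n (dv u)) u := by
    intro u
    unfold Vs
    apply HasDerivAt.fun_sum
    intro k _
    exact (hvd u k).smul_const (Ck n k)
  have hexpR : (NormedSpace.exp : Matrix (Fin n) (Fin n) ℂ → _) = NormedSpace.exp :=
    rfl
  have hE : ∀ u : ℝ, HasDerivAt (fun u : ℝ => NormedSpace.exp ((β - u) • M))
      (-(NormedSpace.exp ((β - u) • M) * M)) u := by
    intro u
    have h1 : HasDerivAt (fun s : ℝ => NormedSpace.exp (s • M))
        (NormedSpace.exp ((β - u) • M) * M) (β - u) := hasDerivAt_exp_smul_const M (β - u)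
    have h2 : HasDerivAt (fun u : ℝ => β - u) (-1) u := by
      simpa using (hasDerivAt_id u).const_sub β
    have := h1.scomp u h2
    rw [hexpR]
    exact this.congr_deriv (by simp)
  have hg : ∀ u : ℝ, HasDerivAt (fun u => NormedSpace.exp ((β - u) • M) * Vs n (v u))
      (0 : Matrix (Fin n) (Fin n) ℂ) u := by
    intro u
    have := (hE u).fun_mul (hW u)
    have hzero : -(NormedSpace.exp ((β - u) • M) * M) * Vs n (v u)
        + NormedSpace.exp ((β - u) • M) * Vs n (dv u) = 0 := by
      rw [neg_mul, mul_assoc, mul_Vs, hMv]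
      exact neg_add_cancel _
    rwa [hzero] at this
  have hconst : (fun u => NormedSpace.exp ((β - u) • M) * Vs n (v u)) β
      = (fun u => NormedSpace.exp ((β - u) • M) * Vs n (v u)) 0 := by
    exact is_const_of_deriv_eq_zero (fun u => (hg u).differentiableAt)
      (fun u => (hg u).deriv) β 0
  simp only [sub_self, sub_zero, zero_smul, NormedSpace.exp_zero, one_mul] at hconst
  have hfinal : Vs n (v β) = Vs n ((NormedSpace.exp (β • M)).mulVec (v 0)) := by
    rw [← mul_Vs]; exact hconst
  funext k
  have := congrFun (congrFun hfinal k) k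
  rw [Vs_apply, Vs_apply] at this
  exact this.symm
end
noncomputable section

lemma hw_eq (n : ℕ) : hw n = wv n 1 0 := by
  funext k
  rw [hw, wv]
  by_cases h : (k:ℕ) = 0
  · simp [h]
  · simp [h, zero_pow h]

lemma half_deriv (u : ℝ) : HasDerivAt (fun u : ℝ => u / 2) (1/2) u :=
  (hasDerivAt_id u).div_const 2

lemma stepθ (n : ℕ) (θ : ℝ) :
    (NormedSpace.exp ((-(θ:ℂ) * Complex.I) • S2 n)).mulVec (hw n)
      = wv n ((Real.cos (θ/2) : ℝ) : ℂ) ((Real.sin (θ/2) : ℝ) : ℂ) := by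
  have hmat : (-(θ:ℂ) * Complex.I) • S2 n
      = θ • ((0:ℂ) • S1 n + (-Complex.I) • S2 n + (0:ℂ) • S3 n) := by
    ext i j
    simp only [Matrix.add_apply, Matrix.smul_apply, smul_eq_mul, Complex.real_smul]
    ring
  set a : ℝ → ℂ := fun u => ((Real.cos (u/2) : ℝ) : ℂ) with hadef
  set b : ℝ → ℂ := fun u => ((Real.sin (u/2) : ℝ) : ℂ) with hbdef
  have ha : ∀ u, HasDerivAt a (((0:ℂ) * a u + ((0:ℂ) - Complex.I * (-Complex.I)) * b u)/2) u := by
    intro u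
    have h1 := ((Real.hasDerivAt_cos (u/2)).comp u (half_deriv u)).ofReal_comp
    refine h1.congr_deriv (Eq.symm ?_)
    simp [hbdef, Complex.I_mul_I]
    push_cast
    ring
  have hb : ∀ u, HasDerivAt b ((((0:ℂ) + Complex.I * (-Complex.I)) * a u - (0:ℂ) * b u)/2) u := by
    intro u
    have h1 := ((Real.hasDerivAt_sin (u/2)).comp u (half_deriv u)).ofReal_comp
    refine h1.congr_deriv (Eq.symm ?_)
    simp [hadef, Complex.I_mul_I]
    push_cast
    ring
  have hm := master n 0 (-Complex.I) 0 a b ha hb θ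
  have ha0 : a 0 = 1 := by simp [hadef]
  have hb0 : b 0 = 0 := by simp [hbdef]
  rw [ha0, hb0] at hm
  rw [hmat, hw_eq]
  exact hm

lemma stepφ (n : ℕ) (φ : ℝ) (x y : ℂ) :
    (NormedSpace.exp ((-(φ:ℂ) * Complex.I) • S3 n)).mulVec (wv n x y)
      = wv n (Complex.exp (-Complex.I * (φ:ℂ) / 2) * x)
          (Complex.exp (Complex.I * (φ:ℂ) / 2) * y) := by
  have hmat : (-(φ:ℂ) * Complex.I) • S3 n
      = φ • ((0:ℂ) • S1 n + (0:ℂ) • S2 n + (-Complex.I) • S3 n) := by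
    ext i j
    simp only [Matrix.add_apply, Matrix.smul_apply, smul_eq_mul, Complex.real_smul]
    ring
  set a : ℝ → ℂ := fun u => Complex.exp (-Complex.I * (u:ℂ) / 2) * x with hadef
  set b : ℝ → ℂ := fun u => Complex.exp (Complex.I * (u:ℂ) / 2) * y with hbdef
  have ha : ∀ u, HasDerivAt a
      (((-Complex.I) * a u + ((0:ℂ) - Complex.I * (0:ℂ)) * b u)/2) u := by
    intro u
    have h0 : HasDerivAt (fun z : ℂ => Complex.exp (-Complex.I * z / 2) * x)
        (Complex.exp (-Complex.I * (u:ℂ) / 2) * (-Complex.I/2) * x) (u:ℝ) := by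
      have h1 : HasDerivAt (fun z : ℂ => -Complex.I * z / 2) (-Complex.I/2) (u:ℂ) := by
        simpa using ((hasDerivAt_id (u:ℂ)).const_mul (-Complex.I)).div_const 2
      exact h1.cexp.mul_const x
    have h2 := h0.comp_ofReal
    convert h2 using 1
    simp [hadef]
    ring
  have hb : ∀ u, HasDerivAt b
      ((((0:ℂ) + Complex.I * (0:ℂ)) * a u - (-Complex.I) * b u)/2) u := by
    intro u
    have h0 : HasDerivAt (fun z : ℂ => Complex.exp (Complex.I * z / 2) * y)
        (Complex.exp (Complex.I * (u:ℂ) / 2) * (Complex.I/2) * y) (u:ℝ) := by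
      have h1 : HasDerivAt (fun z : ℂ => Complex.I * z / 2) (Complex.I/2) (u:ℂ) := by
        simpa using ((hasDerivAt_id (u:ℂ)).const_mul Complex.I).div_const 2
      exact h1.cexp.mul_const y
    have h2 := h0.comp_ofReal
    convert h2 using 1
    simp [hbdef]
    ring
  have hm := master n 0 0 (-Complex.I) a b ha hb φ
  have ha0 : a 0 = x := by simp [hadef]
  have hb0 : b 0 = y := by simp [hbdef]
  rw [ha0, hb0] at hm
  rw [hmat]
  exact hm
end
noncomputable section
lemma coshC (u : ℝ) : HasDerivAt (fun u : ℝ => ((Real.cosh (u/2) : ℝ) : ℂ))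
    (((Real.sinh (u/2) * (1/2) : ℝ) : ℂ)) u := by
  have := ((Real.hasDerivAt_cosh (u/2)).comp u (half_deriv u)).ofReal_comp; exact this

lemma sinhC (u : ℝ) : HasDerivAt (fun u : ℝ => ((Real.sinh (u/2) : ℝ) : ℂ))
    (((Real.cosh (u/2) * (1/2) : ℝ) : ℂ)) u := by
  have := ((Real.hasDerivAt_sinh (u/2)).comp u (half_deriv u)).ofReal_comp; exact this

lemma stepT (n : ℕ) (β : ℝ) (t₁ t₂ t₃ : ℝ) (ht : t₁^2 + t₂^2 + t₃^2 = 1) (x y : ℂ) :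
    (NormedSpace.exp (β • ((-(t₁:ℂ)) • S1 n + (-(t₂:ℂ)) • S2 n + (-(t₃:ℂ)) • S3 n))).mulVec
        (wv n x y)
      = wv n
        (((Real.cosh (β/2) : ℝ) : ℂ) * x -
          ((Real.sinh (β/2) : ℝ) : ℂ) * ((t₃:ℂ)*x + ((t₁:ℂ) - Complex.I*(t₂:ℂ))*y))
        (((Real.cosh (β/2) : ℝ) : ℂ) * y -
          ((Real.sinh (β/2) : ℝ) : ℂ) * (((t₁:ℂ) + Complex.I*(t₂:ℂ))*x - (t₃:ℂ)*y)) := by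
  have htC : ((t₁:ℂ))^2 + ((t₂:ℂ))^2 + ((t₃:ℂ))^2 = 1 := by
    have := congrArg (Complex.ofReal) ht
    push_cast at this
    exact this
  have hI : Complex.I^2 = -1 := Complex.I_sq
  set K₁ : ℂ := (t₃:ℂ)*x + ((t₁:ℂ) - Complex.I*(t₂:ℂ))*y with hK₁
  set K₂ : ℂ := ((t₁:ℂ) + Complex.I*(t₂:ℂ))*x - (t₃:ℂ)*y with hK₂
  set a : ℝ → ℂ := fun u => ((Real.cosh (u/2) : ℝ) : ℂ) * x - ((Real.sinh (u/2) : ℝ) : ℂ) * K₁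
    with hadef
  set b : ℝ → ℂ := fun u => ((Real.cosh (u/2) : ℝ) : ℂ) * y - ((Real.sinh (u/2) : ℝ) : ℂ) * K₂
    with hbdef
  have ha : ∀ u, HasDerivAt a
      ((((-(t₃:ℂ))) * a u + (((-(t₁:ℂ))) - Complex.I * ((-(t₂:ℂ)))) * b u)/2) u := by
    intro u
    have h1 := ((coshC u).mul_const x).sub ((sinhC u).mul_const K₁)
    refine h1.congr_deriv (Eq.symm ?_)
    simp only [hadef, hbdef, hK₁, hK₂]
    push_cast
    linear_combination (Complex.sinh ((u:ℂ)/2)/2 * x) * htC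
      - (Complex.sinh ((u:ℂ)/2)/2 * x * ((t₂:ℂ))^2) * hI
  have hb : ∀ u, HasDerivAt b
      (((((-(t₁:ℂ))) + Complex.I * ((-(t₂:ℂ)))) * a u - ((-(t₃:ℂ))) * b u)/2) u := by
    intro u
    have h1 := ((coshC u).mul_const y).sub ((sinhC u).mul_const K₂)
    refine h1.congr_deriv (Eq.symm ?_)
    simp only [hadef, hbdef, hK₁, hK₂]
    push_cast
    linear_combination (Complex.sinh ((u:ℂ)/2)/2 * y) * htC
      - (Complex.sinh ((u:ℂ)/2)/2 * y * ((t₂:ℂ))^2) * hI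
  have hm := master n (-(t₁:ℂ)) (-(t₂:ℂ)) (-(t₃:ℂ)) a b ha hb β
  have ha0 : a 0 = x := by simp [hadef]
  have hb0 : b 0 = y := by simp [hbdef]
  rw [ha0, hb0] at hm
  exact hm
end
noncomputable section
lemma dot_wv (n : ℕ) (hn : 0 < n) (x y X Y : ℂ) :
    star (wv n x y) ⬝ᵥ wv n X Y
      = ((starRingEnd ℂ x) * X + (starRingEnd ℂ y) * Y)^(n-1) := by
  have hterm : ∀ k : Fin n, star (wv n x y) k * wv n X Y k
      = (((n-1).choose (k:ℕ) : ℕ) : ℂ) * ((starRingEnd ℂ x) * X)^(n-1-(k:ℕ))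
          * ((starRingEnd ℂ y) * Y)^(k:ℕ) := by
    intro k
    show (starRingEnd ℂ) (wv n x y k) * wv n X Y k = _
    rw [wv]
    simp only [_root_.map_mul, map_pow, Complex.conj_ofReal]
    have hs : ((Real.sqrt ((n-1).choose (k:ℕ)) : ℝ) : ℂ)
        * ((Real.sqrt ((n-1).choose (k:ℕ)) : ℝ) : ℂ) = (((n-1).choose (k:ℕ) : ℕ) : ℂ) := by
      rw [← Complex.ofReal_mul, Real.mul_self_sqrt (Nat.cast_nonneg _)]
      push_cast
      ring
    calc ((Real.sqrt ((n-1).choose (k:ℕ)) : ℝ) : ℂ) * (starRingEnd ℂ x)^(n-1-(k:ℕ))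
          * (starRingEnd ℂ y)^(k:ℕ)
          * (((Real.sqrt ((n-1).choose (k:ℕ)) : ℝ) : ℂ) * X^(n-1-(k:ℕ)) * Y^(k:ℕ))
        = (((Real.sqrt ((n-1).choose (k:ℕ)) : ℝ) : ℂ)
            * ((Real.sqrt ((n-1).choose (k:ℕ)) : ℝ) : ℂ))
            * (((starRingEnd ℂ x) * X)^(n-1-(k:ℕ))) * (((starRingEnd ℂ y) * Y)^(k:ℕ)) := by
          rw [mul_pow, mul_pow]; ring
      _ = _ := by rw [hs]
  have hnn : n - 1 + 1 = n := by omega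
  rw [dotProduct, Finset.sum_congr rfl (fun k _ => hterm k),
    Fin.sum_univ_eq_sum_range (fun k => (((n-1).choose k : ℕ):ℂ)
      * ((starRingEnd ℂ x) * X)^(n-1-k) * ((starRingEnd ℂ y) * Y)^k) n,
    add_comm ((starRingEnd ℂ x) * X), add_pow, hnn]
  apply Finset.sum_congr rfl
  intro k _
  ring
end
noncomputable section
lemma base_eq (c s C S t₁ t₂ t₃ ch sh : ℝ)
    (hpφ : (c:ℂ)^2 + (s:ℂ)^2 = 1) (hpθ : (C:ℂ)^2 + (S:ℂ)^2 = 1) :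
    ((c:ℂ) + (s:ℂ)*Complex.I) * (C:ℂ) *
        ((ch:ℂ) * (((c:ℂ) - (s:ℂ)*Complex.I) * (C:ℂ))
          - (sh:ℂ) * ((t₃:ℂ) * (((c:ℂ) - (s:ℂ)*Complex.I) * (C:ℂ))
              + ((t₁:ℂ) - Complex.I*(t₂:ℂ)) * (((c:ℂ) + (s:ℂ)*Complex.I) * (S:ℂ))))
    + ((c:ℂ) - (s:ℂ)*Complex.I) * (S:ℂ) *
        ((ch:ℂ) * (((c:ℂ) + (s:ℂ)*Complex.I) * (S:ℂ))
          - (sh:ℂ) * (((t₁:ℂ) + Complex.I*(t₂:ℂ)) * (((c:ℂ) - (s:ℂ)*Complex.I) * (C:ℂ))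
              - (t₃:ℂ) * (((c:ℂ) + (s:ℂ)*Complex.I) * (S:ℂ))))
    = (ch:ℂ) - ((2*(S:ℂ)*(C:ℂ)*((c:ℂ)^2-(s:ℂ)^2))*(t₁:ℂ)
        + (2*(S:ℂ)*(C:ℂ))*(2*(s:ℂ)*(c:ℂ))*(t₂:ℂ)
        + ((C:ℂ)^2-(S:ℂ)^2)*(t₃:ℂ)) * (sh:ℂ) := by
  linear_combination
    (-(ch:ℂ) * (s:ℂ)^2 + (sh:ℂ) * (t₃:ℂ) * ((C:ℂ)^2-(S:ℂ)^2) * (s:ℂ)^2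
      - (sh:ℂ) * (C:ℂ) * (S:ℂ) * (2*(t₁:ℂ)*(s:ℂ)^2 - 4*(c:ℂ)*(s:ℂ)*(t₂:ℂ))) * Complex.I_sq
    + ((ch:ℂ) - (sh:ℂ) * (t₃:ℂ) * ((C:ℂ)^2-(S:ℂ)^2)) * hpφ
    + ((ch:ℂ) * ((c:ℂ)^2 - Complex.I^2 * (s:ℂ)^2)) * hpθ
end

/-- The Q-function of the thermal operator:
⟨x̂| e^{-β t̂·s} |x̂⟩ = (cosh(β/2) - (x̂·t̂) sinh(β/2))^{2j}. -/
theorem stmt8 (n : ℕ) (hn : 0 < n) (β : ℝ) (t : Fin 3 → ℝ) (ht : ∑ k, (t k) ^ 2 = 1)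
    (θ φ : ℝ) :
    star (coh n θ φ) ⬝ᵥ
      ((NormedSpace.exp ((-(β : ℂ)) • ∑ k, ((t k : ℝ) : ℂ) • Svec n k)).mulVec
        (coh n θ φ)) =
    (((Real.cosh (β/2) - (∑ k, xhat θ φ k * t k) * Real.sinh (β/2)) ^ (n - 1) : ℝ) : ℂ) := by
  have hcoh : coh n θ φ = wv n
      (Complex.exp (-Complex.I * (φ:ℂ) / 2) * ((Real.cos (θ/2) : ℝ):ℂ))
      (Complex.exp (Complex.I * (φ:ℂ) / 2) * ((Real.sin (θ/2) : ℝ):ℂ)) := by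
    rw [coh, Dmat, ← Matrix.mulVec_mulVec, stepθ, stepφ]
  have htt : t 0 ^2 + t 1 ^2 + t 2 ^2 = 1 := by rw [Fin.sum_univ_three] at ht; exact ht
  have hmatT : (-(β:ℂ)) • ∑ k, ((t k : ℝ):ℂ) • Svec n k
      = β • ((-((t 0:ℝ):ℂ)) • S1 n + (-((t 1:ℝ):ℂ)) • S2 n + (-((t 2:ℝ):ℂ)) • S3 n) := by
    rw [Fin.sum_univ_three]
    show (-(β:ℂ)) • (((t 0:ℝ):ℂ) • S1 n + ((t 1:ℝ):ℂ) • S2 n + ((t 2:ℝ):ℂ) • S3 n) = _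
    ext i j
    simp only [Matrix.add_apply, Matrix.smul_apply, smul_eq_mul, Complex.real_smul]
    push_cast
    ring
  rw [hcoh, hmatT, stepT n β (t 0) (t 1) (t 2) htt, dot_wv n hn, Complex.ofReal_pow]
  congr 1
  have hEd : Complex.exp (Complex.I * (φ:ℂ)/2)
      = ((Real.cos (φ/2):ℝ):ℂ) + ((Real.sin (φ/2):ℝ):ℂ) * Complex.I := by
    rw [show Complex.I * (φ:ℂ)/2 = ((φ/2 : ℝ):ℂ) * Complex.I by push_cast; ring,
      Complex.exp_mul_I, ← Complex.ofReal_cos, ← Complex.ofReal_sin]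
  have hFd : Complex.exp (-Complex.I * (φ:ℂ)/2)
      = ((Real.cos (φ/2):ℝ):ℂ) - ((Real.sin (φ/2):ℝ):ℂ) * Complex.I := by
    rw [show -Complex.I * (φ:ℂ)/2 = ((-(φ/2) : ℝ):ℂ) * Complex.I by push_cast; ring,
      Complex.exp_mul_I, ← Complex.ofReal_cos, ← Complex.ofReal_sin,
      Real.cos_neg, Real.sin_neg]
    push_cast
    ring
  rw [Fin.sum_univ_three, hEd, hFd]
  simp only [xhat, Matrix.cons_val_zero, Matrix.cons_val_one, Matrix.head_cons,
    Matrix.cons_val_two, Matrix.tail_cons]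
  have hsθ : Real.sin θ = 2 * Real.sin (θ/2) * Real.cos (θ/2) := by
    have h2 := Real.sin_two_mul (θ/2)
    rw [show 2*(θ/2) = θ by ring] at h2
    exact h2
  have hcθ : Real.cos θ = Real.cos (θ/2)^2 - Real.sin (θ/2)^2 := by
    have h2 := Real.cos_two_mul' (θ/2)
    rw [show 2*(θ/2) = θ by ring] at h2
    exact h2
  have hsφ : Real.sin φ = 2 * Real.sin (φ/2) * Real.cos (φ/2) := by
    have h2 := Real.sin_two_mul (φ/2)
    rw [show 2*(φ/2) = φ by ring] at h2
    exact h2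
  have hcφ : Real.cos φ = Real.cos (φ/2)^2 - Real.sin (φ/2)^2 := by
    have h2 := Real.cos_two_mul' (φ/2)
    rw [show 2*(φ/2) = φ by ring] at h2
    exact h2
  rw [hsθ, hcθ, hsφ, hcφ]
  have hpφ : ((Real.cos (φ/2):ℝ):ℂ)^2 + ((Real.sin (φ/2):ℝ):ℂ)^2 = 1 := by
    have h : Real.cos (φ/2)^2 + Real.sin (φ/2)^2 = 1 := by
      linarith [Real.sin_sq_add_cos_sq (φ/2)]
    rw [← Complex.ofReal_pow, ← Complex.ofReal_pow, ← Complex.ofReal_add, h, Complex.ofReal_one]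
  have hpθ : ((Real.cos (θ/2):ℝ):ℂ)^2 + ((Real.sin (θ/2):ℝ):ℂ)^2 = 1 := by
    have h : Real.cos (θ/2)^2 + Real.sin (θ/2)^2 = 1 := by
      linarith [Real.sin_sq_add_cos_sq (θ/2)]
    rw [← Complex.ofReal_pow, ← Complex.ofReal_pow, ← Complex.ofReal_add, h, Complex.ofReal_one]
  have hbase := base_eq (Real.cos (φ/2)) (Real.sin (φ/2)) (Real.cos (θ/2)) (Real.sin (θ/2))
    (t 0) (t 1) (t 2) (Real.cosh (β/2)) (Real.sinh (β/2)) hpφ hpθ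
  simp only [map_add, map_sub, _root_.map_mul, Complex.conj_ofReal, Complex.conj_I]
  push_cast at hbase ⊢
  linear_combination hbase
end

section
/- Fix half-integer j and let μ be the probability measure on the unit sphere S² with density proportional to 1/(cosh(β/2) + (x̂·t̂) sinh(β/2))^{2j+2} with respect to the uniform measure. Then ((2j+1)/(4π))·c_j ∫_{S²} ⟨j,m| x̂⟩⟨x̂ |j,m'⟩ / Q_{j+1}(-x̂) d²x̂ = e^{-βm} δ_{mm'} for all m, m' ∈ {-j,…,j}, where t̂ = (0,0,1), Q_{j+1}(-x̂) = (cosh(β/2) + (x̂·t̂)sinh(β/2))^{2j+2}, and c_j is as in Eq. (6). -/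
open Matrix Complex Real

noncomputable section

/-- Coherent-state component ⟨j,m|x̂⟩ = C(2j,j-m)^{1/2} e^{-imφ}
cos^{j+m}(θ/2) sin^{j-m}(θ/2), where the index k corresponds to m = j-k,
so j+m = (n-1)-k and j-m = k. -/
def cohComp (n : ℕ) (k : Fin n) (θ φ : ℝ) : ℂ :=
  ((Real.sqrt (Nat.choose (n - 1) k) : ℝ) : ℂ) *
    Complex.exp (-Complex.I * (mval n k : ℂ) * (φ : ℂ)) *
    ((Real.cos (θ/2) : ℝ) : ℂ) ^ (n - 1 - (k : ℕ)) *
    ((Real.sin (θ/2) : ℝ) : ℂ) ^ (k : ℕ)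

/-- The normalization coefficient c_j of Eq. (6), with 2j+1 = n. -/
def cjNorm (n : ℕ) (β : ℝ) : ℝ :=
  2 * Real.sinh ((jr n + 1/2) * β) /
    (((Real.cosh (β/2) - Real.sinh (β/2)) ^ n)⁻¹ -
      ((Real.cosh (β/2) + Real.sinh (β/2)) ^ n)⁻¹)

theorem cj_eq_one (n : ℕ) (hn : 0 < n) (β : ℝ) (hβ : 0 < β) :
    2 * Real.sinh ((((n:ℝ)-1)/2 + 1/2) * β) /
    (((Real.cosh (β/2) - Real.sinh (β/2)) ^ n)⁻¹ -
      ((Real.cosh (β/2) + Real.sinh (β/2)) ^ n)⁻¹) = 1 := by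
  rw [Real.cosh_sub_sinh, Real.cosh_add_sinh, ← Real.exp_nat_mul, ← Real.exp_nat_mul,
    ← Real.exp_neg, ← Real.exp_neg]
  have h1 : (((n:ℝ)-1)/2 + 1/2) * β = n * (β/2) := by ring
  have h3 : (n:ℝ) * -(β/2) = -(n * (β/2)) := by ring
  rw [h1, h3, Real.sinh_eq, neg_neg, Real.exp_neg]
  have h2 : Real.exp (n * (β/2)) - (Real.exp (n*(β/2)))⁻¹ ≠ 0 := by
    have h4 : (Real.exp (n*(β/2)))⁻¹ < Real.exp (n * (β/2)) := by
      rw [← Real.exp_neg]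
      apply Real.exp_lt_exp.2
      have : 0 < (n:ℝ) * (β/2) := by positivity
      linarith
    linarith
  rw [mul_div_assoc', mul_div_cancel_left₀ _ (two_ne_zero), div_self h2]

open Finset in
theorem sumid (k : ℕ) : ∀ x : ℝ, (∀ i ∈ range (k+1), x - i ≠ 0) →
    ∑ i ∈ range (k+1), (Nat.choose k i : ℝ) * (-1)^(k-i) / (x - i) =
      (Nat.factorial k : ℝ) / ∏ i ∈ range (k+1), (x - i) := by
  induction k with
  | zero => intro x hx; simp
  | succ k ih =>
    intro x hx
    have hx0 : x ≠ 0 := by simpa using hx 0 (by simp)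
    have hx' : ∀ i ∈ range (k+1), x - i ≠ 0 := fun i hi => hx i (by
      simp at hi ⊢; omega)
    have hx'' : ∀ i ∈ range (k+1), (x-1) - i ≠ 0 := by
      intro i hi
      have h := hx (i+1) (by simp at hi ⊢; omega)
      push_cast at h ⊢
      intro hc; exact h (by linarith)
    have key : ∑ i ∈ range (k+2), (Nat.choose (k+1) i : ℝ) * (-1)^(k+1-i) / (x - i)
        = (∑ i ∈ range (k+1), (Nat.choose k i : ℝ) * (-1)^(k-i) / ((x-1) - i))
          - ∑ i ∈ range (k+1), (Nat.choose k i : ℝ) * (-1)^(k-i) / (x - i) := by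
      rw [Finset.sum_range_succ' _ (k+1)]
      have e1 : ∀ i ∈ range (k+1), (Nat.choose (k+1) (i+1) : ℝ) * (-1)^(k+1-(i+1)) / (x - (i+1:ℕ))
          = (Nat.choose k i : ℝ) * (-1)^(k-i) / ((x-1) - i)
            - (Nat.choose k (i+1) : ℝ) * (-1)^(k-(i+1)) / (x - (i+1:ℕ)) := by
        intro i hi
        simp only [mem_range] at hi
        rw [Nat.choose_succ_succ]
        simp only [Nat.succ_eq_add_one]
        have h1 : k+1-(i+1) = k-i := by omega
        rw [h1]
        have h2 : (x-1) - i = x - ((i:ℝ)+1) := by ring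
        push_cast
        rw [h2]
        by_cases hik : i = k
        · subst hik; simp [Nat.choose_succ_self]
        · have h3 : k - i = (k - (i+1)) + 1 := by omega
          rw [h3, pow_succ]
          push_cast
          ring
      rw [Finset.sum_congr rfl e1, Finset.sum_sub_distrib]
      have e2 : ∑ i ∈ range (k+1), (Nat.choose k (i+1) : ℝ) * (-1)^(k-(i+1)) / (x - (i+1:ℕ))
          = (∑ i ∈ range (k+2), (Nat.choose k i : ℝ) * (-1)^(k-i) / (x - i))
            - (Nat.choose k 0 : ℝ) * (-1)^(k-0) / (x - (0:ℕ)) := by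
        rw [Finset.sum_range_succ' (fun i => (Nat.choose k i : ℝ) * (-1)^(k-i) / (x - i)) (k+1)]
        ring
      rw [e2, Finset.sum_range_succ (fun i => (Nat.choose k i : ℝ) * (-1)^(k-i) / (x - i)) (k+1)]
      simp only [Nat.choose_succ_self, Nat.cast_zero, zero_mul, zero_div, add_zero,
        Nat.choose_zero_right, Nat.cast_one, one_mul, Nat.sub_zero, sub_zero, Nat.cast_ofNat]
      push_cast
      ring
    rw [key, ih (x-1) hx'', ih x hx']
    have hp1 : ∏ i ∈ range (k+1), ((x-1) - i) = (∏ i ∈ range (k+2), (x - i)) / x := by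
      rw [Finset.prod_range_succ' (fun i => x - i) (k+1)]
      rw [eq_div_iff hx0]
      simp only [Nat.cast_zero, sub_zero]
      congr 1
      apply Finset.prod_congr rfl
      intro i hi; push_cast; ring
    have hxk : x - ((k:ℝ)+1) ≠ 0 := by
      have h := hx (k+1) (by simp)
      push_cast at h; exact h
    have hp2 : ∏ i ∈ range (k+1), (x - i) = (∏ i ∈ range (k+2), (x - i)) / (x - ((k:ℝ)+1)) := by
      rw [Finset.prod_range_succ (fun i => x - i) (k+1)]
      push_cast
      field_simp
    have hprod_ne : (∏ i ∈ range (k+2), (x - i)) ≠ 0 := Finset.prod_ne_zero_iff.2 hx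
    rw [hp1, hp2]
    rw [div_div_eq_mul_div, div_div_eq_mul_div, div_sub_div_same]
    rw [div_eq_div_iff hprod_ne hprod_ne]
    push_cast [Nat.factorial_succ]
    ring

open Finset in
theorem diagint (n : ℕ) (hn : 0 < n) (β : ℝ) (hβ : 0 < β) (k : ℕ) (hk : k < n) :
    ∫ θ in (0:ℝ)..Real.pi,
      (Real.sin θ / (Real.cosh (β/2) + Real.cos θ * Real.sinh (β/2)) ^ (n+1)) *
      ((Nat.choose (n-1) k : ℝ) * Real.cos (θ/2)^(2*(n-1-k)) * Real.sin (θ/2)^(2*k))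
    = (2 / (n:ℝ)) * Real.exp (-(β * ((((n:ℝ)-1)/2) - k))) := by
  set a := Real.cosh (β/2) with ha
  set b := Real.sinh (β/2) with hb
  set P := Real.exp (β/2) with hP
  set Q := Real.exp (-(β/2)) with hQ
  have hab : a + b = P := Real.cosh_add_sinh _
  have hab2 : a - b = Q := Real.cosh_sub_sinh _
  have hQpos : 0 < Q := Real.exp_pos _
  have hPpos : 0 < P := Real.exp_pos _
  have hbpos : 0 < b := Real.sinh_pos_iff.2 (by positivity)
  have hD : ∀ θ : ℝ, 0 < a + Real.cos θ * b := by
    intro θ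
    nlinarith [Real.neg_one_le_cos θ, hQpos, hab2]
  set Cnk := (Nat.choose (n-1) k : ℝ) with hCnk
  set f : ℝ → ℝ := fun θ =>
    (Real.sin θ / (a + Real.cos θ * b) ^ (n+1)) *
      (Cnk * Real.cos (θ/2)^(2*(n-1-k)) * Real.sin (θ/2)^(2*k)) with hf
  set coef : ℕ → ℝ := fun i =>
    -2 * Cnk * (Nat.choose k i : ℝ) * (-1:ℝ)^(k-i) * P^(k-i) / (Q^(k+1) * ((n:ℝ) - i))
    with hcoef
  set F : ℝ → ℝ := fun θ => ∑ i ∈ range (k+1),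
    coef i * (Real.cos (θ/2)^2 / (a + Real.cos θ * b))^(n-i) with hF
  -- derivative of the base function
  have hg : ∀ θ : ℝ, HasDerivAt (fun θ => Real.cos (θ/2)^2 / (a + Real.cos θ * b))
      (-(Q * Real.sin θ) / (2*(a + Real.cos θ * b)^2)) θ := by
    intro θ
    have hc : HasDerivAt (fun θ : ℝ => Real.cos (θ/2)) (-Real.sin (θ/2) * (1/2)) θ := by
      have h1 := (Real.hasDerivAt_cos (θ/2)).comp θ ((hasDerivAt_id θ).div_const 2)
      exact h1.congr_deriv (by ring)
    have h1 : HasDerivAt (fun θ : ℝ => Real.cos (θ/2)^2) (-(Real.sin θ)/2) θ := by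
      have h2 := hc.pow 2
      refine h2.congr_deriv (Eq.symm ?_)
      have hs : Real.sin θ = 2 * Real.sin (θ/2) * Real.cos (θ/2) := by
        have h : (2:ℝ) * (θ/2) = θ := by ring
        conv_lhs => rw [← h, Real.sin_two_mul]
      rw [hs]; ring
    have h2 : HasDerivAt (fun θ : ℝ => a + Real.cos θ * b) (-Real.sin θ * b) θ :=
      ((Real.hasDerivAt_cos θ).mul_const b).const_add a
    have h3 := h1.div h2 (hD θ).ne'
    refine h3.congr_deriv (Eq.symm ?_)
    have hhalf : Real.cos (θ/2)^2 = 1/2 + Real.cos θ / 2 := by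
      rw [Real.cos_sq (θ/2), show (2:ℝ)*(θ/2) = θ from by ring]
    have hDne' : a + Real.cos θ * b ≠ 0 := (hD θ).ne'
    rw [div_eq_div_iff (mul_ne_zero two_ne_zero (pow_ne_zero _ hDne')) (pow_ne_zero _ hDne')]
    rw [hhalf, ← hab2]
    ring
  -- derivative of F
  have hderiv : ∀ θ : ℝ, HasDerivAt F (f θ) θ := by
    intro θ
    have hsum : HasDerivAt F (∑ i ∈ range (k+1),
        coef i * (((n-i):ℕ) * (Real.cos (θ/2)^2 / (a + Real.cos θ * b))^(n-i-1) *
          (-(Q * Real.sin θ) / (2*(a + Real.cos θ * b)^2)))) θ := by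
      apply HasDerivAt.fun_sum
      intro i _
      exact ((hg θ).pow (n-i)).const_mul (coef i)
    convert hsum using 1
    -- the algebraic identity
    set c2 := Real.cos (θ/2)^2 with hc2
    set s2 := Real.sin (θ/2)^2 with hs2
    set D := a + Real.cos θ * b with hDdef
    set st := Real.sin θ with hst
    have hc2s2 : s2 + c2 = 1 := Real.sin_sq_add_cos_sq (θ/2)
    have hcosθ : Real.cos θ = 2*c2 - 1 := by
      rw [hc2, Real.cos_sq (θ/2), show (2:ℝ)*(θ/2) = θ from by ring]
      ring
    have hDne : D ≠ 0 := (hD θ).ne'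
    have hDPQ : D - P*c2 = Q*s2 := by
      rw [hDdef, ← hab, ← hab2, hcosθ]; nlinarith [hc2s2]
    set M := Cnk * st * c2^(n-1-k) / (Q^k * D^(n+1)) with hM
    have hterm : ∀ i ∈ range (k+1),
        coef i * (((n-i):ℕ) * (c2 / D)^(n-i-1) * (-(Q * st) / (2*D^2)))
        = M * (D^i * (-(P*c2))^(k-i) * (Nat.choose k i : ℝ)) := by
      intro i hi
      simp only [mem_range] at hi
      have hik : i ≤ k := by omega
      have hin : i < n := by omega
      have hcast : ((n-i : ℕ) : ℝ) = (n:ℝ) - i := by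
        push_cast [Nat.cast_sub hin.le]; ring
      have hni : (n:ℝ) - i ≠ 0 := by
        have : (i:ℝ) < n := by exact_mod_cast hin
        intro h; linarith
      have hsplit1 : c2^(n-i-1) = c2^(n-1-k) * c2^(k-i) := by
        rw [← pow_add]; congr 1; omega
      have hsplit2 : D^(n+1) = D^(n-i-1) * D^i * D^2 := by
        rw [← pow_add, ← pow_add]; congr 1; omega
      have hsplit3 : Q^(k+1) = Q^(k-i) * Q^i * Q := by
        rw [← pow_add, ← pow_succ]; congr 1; omega
      have hsplit4 : Q^k = Q^(k-i) * Q^i := by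
        rw [← pow_add]; congr 1; omega
      have hneg : (-(P*c2))^(k-i) = (-1:ℝ)^(k-i) * (P^(k-i) * c2^(k-i)) := by
        rw [neg_pow, mul_pow]
      rw [hcoef, hM, hcast, div_pow, hsplit1, hsplit2, hsplit3, hsplit4, hneg]
      have hQne : Q ≠ 0 := hQpos.ne'
      field_simp
    rw [Finset.sum_congr rfl hterm, ← Finset.mul_sum]
    have hbin : ∑ i ∈ range (k+1), (D^i * (-(P*c2))^(k-i) * (Nat.choose k i : ℝ))
        = (D + -(P*c2))^k := (add_pow D (-(P*c2)) k).symm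
    rw [hbin]
    have hDQ : D + -(P*c2) = Q*s2 := by rw [← hDPQ]; ring
    rw [hDQ]
    have hfθ : f θ = Real.sin θ / (a + Real.cos θ * b) ^ (n+1) *
        (Cnk * Real.cos (θ/2)^(2*(n-1-k)) * Real.sin (θ/2)^(2*k)) := rfl
    rw [hfθ, pow_mul, pow_mul, ← hc2, ← hs2, ← hst, ← hDdef, hM, mul_pow]
    have hQkne : Q ≠ 0 := hQpos.ne'
    field_simp
  -- integrability
  have hcont : Continuous f := by
    apply Continuous.mul
    · exact Continuous.div (by fun_prop) (by fun_prop)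
        (fun θ => pow_ne_zero _ (hD θ).ne')
    · fun_prop
  have hFTC := intervalIntegral.integral_eq_sub_of_hasDerivAt
    (f := F) (f' := f) (a := 0) (b := Real.pi)
    (fun θ _ => hderiv θ) (hcont.intervalIntegrable 0 Real.pi)
  rw [hFTC]
  -- F π = 0
  have hFpi : F Real.pi = 0 := by
    rw [hF]
    apply Finset.sum_eq_zero
    intro i hi
    simp only [mem_range] at hi
    have : Real.cos (Real.pi/2) = 0 := Real.cos_pi_div_two
    rw [this]
    rw [zero_pow (two_ne_zero), zero_div, zero_pow (by omega : n - i ≠ 0), mul_zero]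
  -- F 0 value
  have hF0 : F 0 = ∑ i ∈ range (k+1), coef i / P^(n-i) := by
    rw [hF]
    apply Finset.sum_congr rfl
    intro i _
    have h0 : (0:ℝ)/2 = 0 := by norm_num
    rw [h0, Real.cos_zero, one_mul, hab, div_pow, one_pow]
    ring
  rw [hFpi, hF0, zero_sub]
  -- evaluate the sum
  have hstep : ∀ i ∈ range (k+1), -(coef i / P^(n-i))
      = (2 * Cnk / (Q^(k+1) * P^(n-k))) * ((Nat.choose k i : ℝ) * (-1)^(k-i) / ((n:ℝ) - i)) := by
    intro i hi
    simp only [mem_range] at hi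
    have hPsplit : P^(n-i) = P^(k-i) * P^(n-k) := by
      rw [← pow_add]; congr 1; omega
    have hni : (n:ℝ) - i ≠ 0 := by
      have : (i:ℝ) < n := by exact_mod_cast (by omega : i < n)
      intro h; linarith
    rw [hcoef, hPsplit]
    field_simp
  rw [← Finset.sum_neg_distrib, Finset.sum_congr rfl hstep, ← Finset.mul_sum]
  have hnei : ∀ i ∈ range (k+1), (n:ℝ) - i ≠ 0 := by
    intro i hi
    simp only [mem_range] at hi
    have : (i:ℝ) < n := by exact_mod_cast (by omega : i < n)
    intro h; linarith
  rw [sumid k (n:ℝ) hnei]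
  -- the product is the descending factorial
  have hprod : ∏ i ∈ range (k+1), ((n:ℝ) - i) = ((n.descFactorial (k+1) : ℕ) : ℝ) := by
    rw [Nat.descFactorial_eq_prod_range, Nat.cast_prod]
    apply Finset.prod_congr rfl
    intro i hi
    simp only [mem_range] at hi
    rw [Nat.cast_sub (by omega : i ≤ n)]
  have hdesc : n.descFactorial (k+1) = n * (Nat.factorial k * Nat.choose (n-1) k) := by
    have h1 : n = (n-1) + 1 := by omega
    calc n.descFactorial (k+1) = ((n-1)+1).descFactorial (k+1) := by rw [← h1]
      _ = ((n-1)+1) * (n-1).descFactorial k := Nat.succ_descFactorial_succ (n-1) k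
      _ = n * (Nat.factorial k * Nat.choose (n-1) k) := by
          rw [← h1, Nat.descFactorial_eq_factorial_mul_choose]
  rw [hprod, hdesc]
  -- final arithmetic
  have hCnkpos : 0 < Cnk := by
    rw [hCnk]
    exact_mod_cast Nat.choose_pos (by omega : k ≤ n - 1)
  have hkfac : (0:ℝ) < (Nat.factorial k : ℝ) := by exact_mod_cast Nat.factorial_pos k
  have hQP : Q^(k+1) * P^(n-k) = Real.exp (((k:ℝ)+1) * -(β/2) + ((n:ℝ)-k) * (β/2)) := by
    rw [Real.exp_add, hQ, hP, ← Real.exp_nat_mul, ← Real.exp_nat_mul]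
    congr 2
    · push_cast; ring
    · rw [Nat.cast_sub hk.le]
  have hX : ((k:ℝ)+1) * -(β/2) + ((n:ℝ)-k) * (β/2) = β * ((((n:ℝ)-1)/2) - k) := by ring
  rw [hX] at hQP
  rw [hQP, Real.exp_neg]
  push_cast
  have hnne : (n:ℝ) ≠ 0 := by positivity
  have hEne : Real.exp (β * ((((n:ℝ)-1)/2) - k)) ≠ 0 := (Real.exp_pos _).ne'
  have hkfacne : (Nat.factorial k : ℝ) ≠ 0 := hkfac.ne'
  have hCnkne : Cnk ≠ 0 := hCnkpos.ne'
  field_simp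
  exact mul_inv_cancel₀ hCnkne

theorem offdiag_aux (n : ℕ) (k k' : Fin n) (hkk : k ≠ k') (r θ : ℝ) :
    (∫ φ in (0:ℝ)..(2 * Real.pi),
      ((r : ℝ) : ℂ) * (cohComp n k θ φ * star (cohComp n k' θ φ))) = 0 := by
  set c : ℂ := Complex.I * (((k:ℕ):ℂ) - ((k':ℕ):ℂ)) with hc_def
  have hexp : ∀ φ : ℝ, Complex.exp (-Complex.I * (mval n k : ℂ) * (φ:ℂ)) *
      (starRingEnd ℂ) (Complex.exp (-Complex.I * (mval n k' : ℂ) * (φ:ℂ)))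
      = Complex.exp (c * φ) := by
    intro φ
    rw [← Complex.exp_conj, ← Complex.exp_add]
    congr 1
    rw [_root_.map_mul, _root_.map_mul, map_neg, Complex.conj_I, Complex.conj_ofReal,
      Complex.conj_ofReal]
    simp only [mval, jr, hc_def]
    push_cast
    ring
  set K : ℂ := ((r : ℝ) : ℂ) * (((Real.sqrt (Nat.choose (n - 1) k) : ℝ) : ℂ) *
      ((Real.sqrt (Nat.choose (n - 1) k') : ℝ) : ℂ) *
      ((Real.cos (θ/2) : ℝ) : ℂ) ^ (n - 1 - (k : ℕ)) *
      ((Real.cos (θ/2) : ℝ) : ℂ) ^ (n - 1 - (k' : ℕ)) *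
      ((Real.sin (θ/2) : ℝ) : ℂ) ^ (k : ℕ) *
      ((Real.sin (θ/2) : ℝ) : ℂ) ^ (k' : ℕ)) with hK
  have hpt : ∀ φ : ℝ, ((r : ℝ) : ℂ) * (cohComp n k θ φ * star (cohComp n k' θ φ))
      = K * Complex.exp (c * φ) := by
    intro φ
    simp only [cohComp, star_mul', star_pow, Complex.star_def, Complex.conj_ofReal, hK]
    rw [← hexp φ]
    ring
  rw [intervalIntegral.integral_congr (g := fun φ => K * Complex.exp (c * φ))
    (fun φ _ => hpt φ)]
  rw [intervalIntegral.integral_const_mul]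
  have hc : c ≠ 0 := by
    apply mul_ne_zero Complex.I_ne_zero
    rw [sub_ne_zero]
    exact_mod_cast fun h => hkk (Fin.val_injective (by exact_mod_cast h))
  rw [integral_exp_mul_complex hc]
  have h1 : c * ((2 * Real.pi : ℝ) : ℂ) = (((k:ℕ):ℤ) - ((k':ℕ):ℤ) : ℤ) * (2 * (Real.pi:ℂ) * Complex.I) := by
    simp only [hc_def]; push_cast; ring
  rw [h1, Complex.exp_int_mul_two_pi_mul_I]
  simp

/-- Equation (7): with t̂ = (0,0,1) so that x̂·t̂ = cos θ and
Q_{j+1}(-x̂) = (cosh(β/2) + cos θ sinh(β/2))^{2j+2},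
((2j+1)/(4π)) c_j ∫_{S²} ⟨j,m|x̂⟩⟨x̂|j,m'⟩ / Q_{j+1}(-x̂) d²x̂ = e^{-βm} δ_{mm'}. -/
theorem stmt19 (n : ℕ) (hn : 0 < n) (β : ℝ) (hβ : 0 < β) :
    ∀ k k' : Fin n,
    ((n : ℂ) / (4 * Real.pi)) * (cjNorm n β : ℂ) *
      (∫ θ in (0:ℝ)..Real.pi, ∫ φ in (0:ℝ)..(2 * Real.pi),
        ((Real.sin θ /
          (Real.cosh (β/2) + Real.cos θ * Real.sinh (β/2)) ^ (n + 1) : ℝ) : ℂ) *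
          (cohComp n k θ φ * star (cohComp n k' θ φ))) =
    if k = k' then ((Real.exp (-(β * mval n k)) : ℝ) : ℂ) else 0 := by
  intro k k'
  have hcj : cjNorm n β = 1 := by
    unfold cjNorm jr
    exact cj_eq_one n hn β hβ
  rw [hcj]
  by_cases hkk : k = k'
  · subst hkk
    rw [if_pos rfl]
    have hnormsqexp : ∀ φ : ℝ,
        Complex.normSq (Complex.exp (-Complex.I * (mval n k : ℂ) * (φ:ℂ))) = 1 := by
      intro φ
      rw [Complex.normSq_eq_norm_sq, Complex.norm_exp]
      simp
    have hdiagpt : ∀ θ φ : ℝ, cohComp n k θ φ * star (cohComp n k θ φ)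
        = ((((Nat.choose (n-1) (k:ℕ)) : ℝ) * Real.cos (θ/2)^(2*(n-1-(k:ℕ))) *
            Real.sin (θ/2)^(2*(k:ℕ)) : ℝ) : ℂ) := by
      intro θ φ
      rw [Complex.star_def, Complex.mul_conj]
      congr 1
      simp only [cohComp, Complex.normSq_mul, map_pow, Complex.normSq_ofReal,
        hnormsqexp]
      rw [Real.mul_self_sqrt (by positivity)]
      ring
    have hinner : ∀ θ : ℝ, (∫ φ in (0:ℝ)..(2 * Real.pi),
        ((Real.sin θ /
          (Real.cosh (β/2) + Real.cos θ * Real.sinh (β/2)) ^ (n + 1) : ℝ) : ℂ) *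
          (cohComp n k θ φ * star (cohComp n k θ φ)))
        = ((2 * Real.pi *
            ((Real.sin θ / (Real.cosh (β/2) + Real.cos θ * Real.sinh (β/2)) ^ (n + 1)) *
             (((Nat.choose (n-1) (k:ℕ)) : ℝ) * Real.cos (θ/2)^(2*(n-1-(k:ℕ))) *
              Real.sin (θ/2)^(2*(k:ℕ)))) : ℝ) : ℂ) := by
      intro θ
      simp only [hdiagpt, ← Complex.ofReal_mul]
      rw [intervalIntegral.integral_ofReal, intervalIntegral.integral_const, smul_eq_mul,
        sub_zero]
    simp only [hinner]
    rw [intervalIntegral.integral_ofReal, intervalIntegral.integral_const_mul,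
      diagint n hn β hβ (k:ℕ) k.isLt]
    simp only [mval, jr]
    have hπ : (Real.pi : ℂ) ≠ 0 := Complex.ofReal_ne_zero.2 Real.pi_ne_zero
    have hnne : (n:ℂ) ≠ 0 := Nat.cast_ne_zero.2 hn.ne'
    push_cast
    field_simp
    ring
  · rw [if_neg hkk]
    simp only [offdiag_aux n k k' hkk, intervalIntegral.integral_zero, mul_zero]

end
end
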